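/- For each d ≥ 4 set ℓ_d = √d and let σ_d be the unique positive solution of 1/(2σ²) = log( √2 d² σ/√π ) (which satisfies σ_d ≥ K/log(d) for some constant K > 0). Then, with ρ_d(x) = (2σ_d^d/(2π)^{d/2}) e^{−σ_d²‖x‖²/2} sin(ℓ_d x₁), there exist c > 0 and d0 such that for all d ≥ d0, sup_{(θ,b) ∈ S^{d−1}×ℝ} | ∫_{ℝ^d} ρ_d(x) ReLU(⟨θ,x⟩ − b) dx | ≥ c/(d log d), i.e. d_{F_{2L}}(μ_d,ν_d) = Ω(1/(d log d)). -/

import Mathlib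

open MeasureTheory

noncomputable section

/-- `ReLU(t) = max(t, 0)`. -/
def relu (t : ℝ) : ℝ := max t 0

/-- The oscillating Gaussian density difference
`ρ_d(x) = (2σ^d/(2π)^{d/2}) e^{−σ²‖x‖²/2} sin(ℓ x₁)`. -/
def rhoSin (d : ℕ) (hd : 0 < d) (σ ℓ : ℝ) (x : EuclideanSpace ℝ (Fin d)) : ℝ :=
  (2 * σ ^ d / (2 * Real.pi) ^ ((d : ℝ) / 2)) *
    Real.exp (-σ ^ 2 * ‖x‖ ^ 2 / 2) * Real.sin (ℓ * x ⟨0, hd⟩)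



lemma relu_nonneg (t : ℝ) : 0 ≤ relu t := le_max_right _ _
lemma relu_of_nonpos {t : ℝ} (h : t ≤ 0) : relu t = 0 := max_eq_right h
lemma relu_of_nonneg {t : ℝ} (h : 0 ≤ t) : relu t = t := max_eq_left h
lemma continuous_relu : Continuous relu := continuous_id.max continuous_const

lemma integrable_gauss_sin_relu (σ ℓ β : ℝ) (hσ : 0 < σ) :
    Integrable (fun t : ℝ => Real.exp (-σ^2*t^2/2) * (Real.sin (ℓ*t) * relu (t-β))) := by
  have ha : 0 < σ^2/2 := by positivity
  have h1a : Integrable (fun t : ℝ => |t| * Real.exp (-(σ^2/2) * t^2)) := by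
    have h := (integrable_rpow_mul_exp_neg_mul_sq ha (by norm_num : (-1:ℝ) < 1)).abs
    refine h.congr (Filter.Eventually.of_forall fun t => ?_)
    simp only [Real.rpow_one, abs_mul, abs_of_nonneg (Real.exp_pos _).le]
  have h1 : Integrable (fun t : ℝ =>
      |t| * Real.exp (-(σ^2/2) * t^2) + |β| * Real.exp (-(σ^2/2) * t^2)) :=
    h1a.add ((integrable_exp_neg_mul_sq ha).const_mul _)
  refine h1.mono' ?_ (Filter.Eventually.of_forall fun t => ?_)
  · apply Continuous.aestronglyMeasurable
    exact (Real.continuous_exp.comp (by continuity)).mul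
      ((Real.continuous_sin.comp (by continuity)).mul
        (continuous_relu.comp (continuous_id.sub continuous_const)))
  · have e1 : ‖Real.exp (-σ^2*t^2/2) * (Real.sin (ℓ*t) * relu (t-β))‖
        = Real.exp (-(σ^2/2)*t^2) * |Real.sin (ℓ*t) * relu (t-β)| := by
      rw [Real.norm_eq_abs, abs_mul, abs_of_nonneg (Real.exp_pos _).le,
        show -σ^2*t^2/2 = -(σ^2/2)*t^2 from by ring]
    rw [e1]
    have habs : |t - β| ≤ |t| + |β| := by
      have := abs_add_le t (-β); rw [abs_neg] at this; simpa [sub_eq_add_neg] using this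
    have h2 : |Real.sin (ℓ*t) * relu (t-β)| ≤ |t| + |β| := by
      rw [abs_mul]
      have hs1 : |Real.sin (ℓ*t)| ≤ 1 := Real.abs_sin_le_one _
      have hr : |relu (t-β)| ≤ |t| + |β| := by
        rw [abs_of_nonneg (relu_nonneg _)]
        calc relu (t-β) ≤ |t - β| := max_le (le_abs_self _) (abs_nonneg _)
          _ ≤ |t| + |β| := habs
      calc |Real.sin (ℓ*t)| * |relu (t-β)| ≤ 1 * (|t| + |β|) :=
            mul_le_mul hs1 hr (abs_nonneg _) zero_le_one
        _ = |t| + |β| := one_mul _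
    calc Real.exp (-(σ^2/2)*t^2) * |Real.sin (ℓ*t) * relu (t-β)|
        ≤ Real.exp (-(σ^2/2)*t^2) * (|t| + |β|) :=
          mul_le_mul_of_nonneg_left h2 (Real.exp_pos _).le
      _ = |t| * Real.exp (-(σ^2/2) * t^2) + |β| * Real.exp (-(σ^2/2) * t^2) := by ring

set_option maxHeartbeats 1000000 in
lemma key_osc (σ ℓ : ℝ) (hσ : 0 < σ) (hσ1 : σ ≤ 1) (hℓ : 2 ≤ ℓ) :
    ∃ β : ℝ, Real.sqrt 2 * (Real.pi/(2*ℓ))^2/64 ≤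
      |∫ t : ℝ, Real.exp (-σ^2*t^2/2) * (Real.sin (ℓ*t) * relu (t-β))| := by
  have hπ : 0 < Real.pi := Real.pi_pos
  have hℓ0 : 0 < ℓ := by linarith
  set h : ℝ := Real.pi/(2*ℓ) with hh
  have hh0 : 0 < h := by positivity
  have hh1 : h ≤ 1 := by
    rw [hh, div_le_one (by positivity)]
    nlinarith [Real.pi_le_four]
  have hhl : ℓ * h = Real.pi/2 := by
    rw [hh]; field_simp
  set J : ℝ → ℝ := fun β => ∫ t : ℝ, Real.exp (-σ^2*t^2/2) * (Real.sin (ℓ*t) * relu (t-β))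
    with hJ
  have hint : ∀ β : ℝ, Integrable
      (fun t : ℝ => Real.exp (-σ^2*t^2/2) * (Real.sin (ℓ*t) * relu (t-β))) :=
    fun β => integrable_gauss_sin_relu σ ℓ β hσ
  set k : ℝ → ℝ := fun t => Real.exp (-σ^2*t^2/2) *
      (Real.sin (ℓ*t) * (relu t - 2*relu (t-h) + relu (t-2*h))) with hk
  have hkint : Integrable k := by
    have he : k = fun t =>
        (Real.exp (-σ^2*t^2/2) * (Real.sin (ℓ*t) * relu (t-0))
          - 2 * (Real.exp (-σ^2*t^2/2) * (Real.sin (ℓ*t) * relu (t-h))))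
          + Real.exp (-σ^2*t^2/2) * (Real.sin (ℓ*t) * relu (t-2*h)) := by
      funext t; rw [hk]; ring_nf
    rw [he]
    exact ((hint 0).sub ((hint h).const_mul 2)).add (hint (2*h))
  have hsplit : ∫ t, k t = J 0 - 2 * J h + J (2*h) := by
    have he : k = fun t =>
        (Real.exp (-σ^2*t^2/2) * (Real.sin (ℓ*t) * relu (t-0))
          - 2 * (Real.exp (-σ^2*t^2/2) * (Real.sin (ℓ*t) * relu (t-h))))
          + Real.exp (-σ^2*t^2/2) * (Real.sin (ℓ*t) * relu (t-2*h)) := by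
      funext t; rw [hk]; ring_nf
    simp only [he]
    have hi2 : Integrable (fun t : ℝ =>
        2 * (Real.exp (-σ^2*t^2/2) * (Real.sin (ℓ*t) * relu (t-h)))) :=
      (hint h).const_mul 2
    have hi1 : Integrable (fun t : ℝ =>
        Real.exp (-σ^2*t^2/2) * (Real.sin (ℓ*t) * relu (t-0))
          - 2 * (Real.exp (-σ^2*t^2/2) * (Real.sin (ℓ*t) * relu (t-h)))) :=
      (hint 0).sub hi2
    rw [integral_add hi1 (hint (2*h)), integral_sub (hint 0) hi2, integral_const_mul]
  have hknn : ∀ t : ℝ, 0 ≤ k t := by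
    intro t
    rcases le_or_gt t 0 with h0 | h0
    · simp only [hk]
      simp only [relu_of_nonpos h0, relu_of_nonpos (by linarith : t - h ≤ 0),
        relu_of_nonpos (by linarith : t - 2*h ≤ 0)]
      norm_num
    rcases le_or_gt t (2*h) with h2 | h2
    · have hsin : 0 ≤ Real.sin (ℓ*t) := by
        apply Real.sin_nonneg_of_nonneg_of_le_pi (by positivity)
        nlinarith
      have hhat : 0 ≤ relu t - 2*relu (t-h) + relu (t-2*h) := by
        rw [relu_of_nonpos (by linarith : t - 2*h ≤ 0), relu_of_nonneg h0.le]
        rcases le_or_gt t h with hth | hth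
        · rw [relu_of_nonpos (by linarith : t - h ≤ 0)]; linarith
        · rw [relu_of_nonneg (by linarith : (0:ℝ) ≤ t - h)]; linarith
      simp only [hk]
      exact mul_nonneg (Real.exp_pos _).le (mul_nonneg hsin hhat)
    · simp only [hk]
      rw [relu_of_nonneg (by linarith : (0:ℝ) ≤ t),
        relu_of_nonneg (by linarith : (0:ℝ) ≤ t - h),
        relu_of_nonneg (by linarith : (0:ℝ) ≤ t - 2*h),
        show t - 2*(t-h) + (t-2*h) = 0 from by ring]
      simp
  have hklow : ∀ t ∈ Set.Icc (h/2) h, Real.sqrt 2 * h/8 ≤ k t := by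
    rintro t ⟨ht1, ht2⟩
    have ht0 : 0 < t := lt_of_lt_of_le (by linarith) ht1
    simp only [hk]
    rw [relu_of_nonneg ht0.le, relu_of_nonpos (by linarith : t - h ≤ 0),
      relu_of_nonpos (by linarith : t - 2*h ≤ 0)]
    have hG : (1:ℝ)/2 ≤ Real.exp (-σ^2*t^2/2) := by
      have := Real.add_one_le_exp (-σ^2*t^2/2)
      nlinarith [sq_nonneg σ, sq_nonneg t, mul_le_one₀ (by nlinarith : σ^2 ≤ 1)
        (by positivity) (by nlinarith : t^2 ≤ 1)]
    have hsin : Real.sqrt 2/2 ≤ Real.sin (ℓ*t) := by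
      have hm1 : (Real.pi/4 : ℝ) ∈ Set.Icc (-(Real.pi/2)) (Real.pi/2) := by
        constructor <;> nlinarith
      have hlt2 : ℓ*t ≤ Real.pi/2 := by
        calc ℓ*t ≤ ℓ*h := by nlinarith
          _ = Real.pi/2 := hhl
      have hlt1 : Real.pi/4 ≤ ℓ*t := by nlinarith
      have hmem : ℓ*t ∈ Set.Icc (-(Real.pi/2)) (Real.pi/2) := by
        constructor <;> nlinarith
      calc Real.sqrt 2/2 = Real.sin (Real.pi/4) := (Real.sin_pi_div_four).symm
        _ ≤ Real.sin (ℓ*t) := Real.strictMonoOn_sin.monotoneOn hm1 hmem hlt1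
    have hs0 : 0 ≤ Real.sin (ℓ*t) := le_trans (by positivity) hsin
    have hstep : (Real.sqrt 2/2)*(h/2) ≤ Real.sin (ℓ*t) * t :=
      mul_le_mul hsin ht1 (by positivity) hs0
    have hfin : (1/2) * ((Real.sqrt 2/2)*(h/2)) ≤
        Real.exp (-σ^2*t^2/2) * (Real.sin (ℓ*t) * t) :=
      mul_le_mul hG hstep (by positivity) (Real.exp_pos _).le
    calc Real.sqrt 2 * h/8 = (1/2) * ((Real.sqrt 2/2)*(h/2)) := by ring
      _ ≤ Real.exp (-σ^2*t^2/2) * (Real.sin (ℓ*t) * t) := hfin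
      _ = Real.exp (-σ^2*t^2/2) * (Real.sin (ℓ*t) * (t - 2*0 + 0)) := by ring
  have hvol : (volume (Set.Icc (h/2) h)).toReal = h/2 := by
    rw [Real.volume_Icc, ENNReal.toReal_ofReal (by linarith)]; ring
  have hlow : Real.sqrt 2 * h^2/16 ≤ ∫ t, k t := by
    have h1 : (Real.sqrt 2 * h/8) * ((volume (Set.Icc (h/2) h)).toReal)
        ≤ ∫ t in Set.Icc (h/2) h, k t :=
      setIntegral_ge_of_const_le_real measurableSet_Icc
        (by rw [Real.volume_Icc]; exact ENNReal.ofReal_ne_top) hklow hkint.integrableOn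
    have h2 : ∫ t in Set.Icc (h/2) h, k t ≤ ∫ t, k t :=
      setIntegral_le_integral hkint (Filter.Eventually.of_forall hknn)
    rw [hvol] at h1
    have : Real.sqrt 2 * h^2/16 = (Real.sqrt 2 * h/8) * (h/2) := by ring
    linarith
  rw [hsplit] at hlow
  have habs : J 0 - 2 * J h + J (2*h) ≤ |J 0| + 2*|J h| + |J (2*h)| := by
    have h1 := le_abs_self (J 0)
    have h2 := neg_abs_le (J h)
    have h3 := le_abs_self (J (2*h))
    linarith
  by_cases hc0 : Real.sqrt 2 * h^2/64 ≤ |J 0|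
  · exact ⟨0, hc0⟩
  by_cases hc1 : Real.sqrt 2 * h^2/64 ≤ |J h|
  · exact ⟨h, hc1⟩
  refine ⟨2*h, ?_⟩
  show Real.sqrt 2 * h^2/64 ≤ |J (2*h)|
  push_neg at hc0 hc1
  linarith



lemma const_id (d : ℕ) (hd : 0 < d) (σ : ℝ) (hσ : 0 < σ) :
    (2 * σ ^ d / (2 * Real.pi) ^ ((d : ℝ) / 2)) * (Real.sqrt (2*Real.pi)/σ)^(d-1)
      = 2*σ/Real.sqrt (2*Real.pi) := by
  have h2π : (0:ℝ) < 2*Real.pi := by positivity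
  have hs : (2*Real.pi) ^ ((d:ℝ)/2) = (Real.sqrt (2*Real.pi))^d := by
    rw [Real.sqrt_eq_rpow, ← Real.rpow_natCast ((2*Real.pi) ^ ((1:ℝ)/2)) d,
      ← Real.rpow_mul h2π.le]
    norm_num
    congr 1
    ring
  rw [hs]
  obtain ⟨n, rfl⟩ := Nat.exists_eq_succ_of_ne_zero hd.ne'
  have hS : (0:ℝ) < Real.sqrt (2*Real.pi) := Real.sqrt_pos.mpr h2π
  simp only [Nat.succ_sub_one]
  rw [pow_succ, pow_succ, div_pow]
  field_simp

lemma reduce (d : ℕ) (hd : 0 < d) (σ ℓ b : ℝ) (hσ : 0 < σ) :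
    (∫ x : EuclideanSpace ℝ (Fin d), rhoSin d hd σ ℓ x * relu (x ⟨0, hd⟩ - b))
      = (2*σ/Real.sqrt (2*Real.pi)) *
        ∫ t : ℝ, Real.exp (-σ^2*t^2/2) * (Real.sin (ℓ*t) * relu (t-b)) := by
  set i0 : Fin d := ⟨0, hd⟩
  set C : ℝ := 2 * σ ^ d / (2 * Real.pi) ^ ((d : ℝ) / 2) with hC
  set F : ℝ → ℝ := fun t => C * (Real.exp (-σ^2*t^2/2) * (Real.sin (ℓ*t) * relu (t-b)))
    with hF
  set G : ℝ → ℝ := fun t => Real.exp (-σ^2*t^2/2) with hG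
  have hmp := (EuclideanSpace.volume_preserving_symm_measurableEquiv_toLp (Fin d)).symm
  rw [← hmp.integral_comp (MeasurableEquiv.measurableEmbedding _)]
  have key : ∀ y : Fin d → ℝ,
      rhoSin d hd σ ℓ ((MeasurableEquiv.toLp 2 (Fin d → ℝ)).symm.symm y)
        * relu ((MeasurableEquiv.toLp 2 (Fin d → ℝ)).symm.symm y i0 - b)
      = ∏ i, (if i = i0 then F else G) (y i) := by
    intro y
    have happ : ∀ i : Fin d, (MeasurableEquiv.toLp 2 (Fin d → ℝ)).symm.symm y i = y i := by
      intro i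
      rfl
    have hnorm : ‖(MeasurableEquiv.toLp 2 (Fin d → ℝ)).symm.symm y‖^2 = ∑ i, (y i)^2 := by
      rw [EuclideanSpace.norm_eq]
      rw [Real.sq_sqrt (by positivity)]
      refine Finset.sum_congr rfl fun i _ => ?_
      rw [happ, Real.norm_eq_abs, sq_abs]
    have hexp : Real.exp (-σ^2 * ‖(MeasurableEquiv.toLp 2 (Fin d → ℝ)).symm.symm y‖^2 / 2)
        = ∏ i, G (y i) := by
      rw [hnorm, show -σ^2 * (∑ i, (y i)^2) / 2 = ∑ i, (-σ^2 * (y i)^2/2) from by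
        rw [Finset.mul_sum, Finset.sum_div]]
      rw [Real.exp_sum]
    have hprodF : ∏ i, (if i = i0 then F else G) (y i)
        = F (y i0) * ∏ i ∈ Finset.univ.erase i0, G (y i) := by
      rw [← Finset.mul_prod_erase Finset.univ _ (Finset.mem_univ i0)]
      simp only [eq_self_iff_true, if_true]
      congr 1
      exact Finset.prod_congr rfl fun i hi => by
        rw [if_neg (Finset.ne_of_mem_erase hi)]
    have hprodG : ∏ i, G (y i) = G (y i0) * ∏ i ∈ Finset.univ.erase i0, G (y i) :=
      (Finset.mul_prod_erase Finset.univ _ (Finset.mem_univ i0)).symm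
    rw [hprodF]
    unfold rhoSin
    rw [hexp, hprodG, happ, hF, hG]
    ring
  rw [integral_congr_ae (Filter.Eventually.of_forall key)]
  rw [MeasureTheory.integral_fintype_prod_volume_eq_prod (ι := Fin d)
    (f := fun i : Fin d => if i = i0 then F else G)]
  rw [← Finset.mul_prod_erase Finset.univ _ (Finset.mem_univ i0)]
  simp only [eq_self_iff_true, if_true]
  have hG1 : ∫ t : ℝ, G t = Real.sqrt (2*Real.pi)/σ := by
    have : ∀ t : ℝ, G t = Real.exp (-(σ^2/2) * t^2) := fun t => by
      rw [hG]; ring_nf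
    rw [funext this, integral_gaussian,
      show Real.pi/(σ^2/2) = 2*Real.pi/σ^2 from by
        rw [div_div_eq_mul_div]; ring,
      Real.sqrt_div (by positivity) (σ^2), Real.sqrt_sq hσ.le]
  rw [Finset.prod_congr rfl (fun (i : Fin d) (hi : i ∈ Finset.univ.erase i0) =>
      show (∫ t : ℝ, (if i = i0 then F else G) t) = ∫ t : ℝ, G t from by
        rw [if_neg (Finset.ne_of_mem_erase hi)]),
    Finset.prod_const, hG1, Finset.card_erase_of_mem (Finset.mem_univ i0),
    Finset.card_univ, Fintype.card_fin]
  have hFint : ∫ t : ℝ, F t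
      = C * ∫ t : ℝ, Real.exp (-σ^2*t^2/2) * (Real.sin (ℓ*t) * relu (t-b)) := by
    rw [hF, integral_const_mul]
  rw [hFint, mul_assoc, mul_comm (∫ t : ℝ, Real.exp (-σ^2*t^2/2) * (Real.sin (ℓ*t) * relu (t-b))), ← mul_assoc, const_id d hd σ hσ]



set_option maxHeartbeats 1000000 in
lemma sigma_bounds (d : ℕ) (hd4 : 4 ≤ d) (s : ℝ) (hs : 0 < s)
    (hE : 1/(2*s^2) = Real.log (Real.sqrt 2 * (d:ℝ)^2 * s / Real.sqrt Real.pi)) :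
    s ≤ 1 ∧ 1/(2*Real.log d) ≤ s := by
  have hd : (4:ℝ) ≤ (d:ℝ) := by exact_mod_cast hd4
  have hd0 : (0:ℝ) < d := by linarith
  have hπ : 0 < Real.pi := Real.pi_pos
  have hsppos : 0 < Real.sqrt Real.pi := Real.sqrt_pos.mpr hπ
  have h2lo : (1.41:ℝ) ≤ Real.sqrt 2 := by
    rw [show (1.41:ℝ) = Real.sqrt (1.41^2) from (Real.sqrt_sq (by norm_num)).symm]
    exact Real.sqrt_le_sqrt (by norm_num)
  have h2hi : Real.sqrt 2 ≤ 1.42 := Real.sqrt_le_iff.mpr ⟨by norm_num, by norm_num⟩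
  have hsphi : Real.sqrt Real.pi ≤ 1.78 :=
    Real.sqrt_le_iff.mpr ⟨by norm_num, by nlinarith [Real.pi_lt_d2]⟩
  have hsplo : (1.77:ℝ) ≤ Real.sqrt Real.pi := by
    rw [show (1.77:ℝ) = Real.sqrt (1.77^2) from (Real.sqrt_sq (by norm_num)).symm]
    exact Real.sqrt_le_sqrt (by nlinarith [Real.pi_gt_d2])
  have hL1 : 1 ≤ Real.log d := by
    rw [Real.le_log_iff_exp_le hd0]
    calc Real.exp 1 ≤ 2.7182818286 := Real.exp_one_lt_d9.le
      _ ≤ (d:ℝ) := by linarith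
  have hL0 : 0 < Real.log d := by linarith
  have hdsq : (16:ℝ) ≤ (d:ℝ)^2 := by nlinarith
  have hs1 : s ≤ 1 := by
    by_contra hc
    push_neg at hc
    have harg : (12:ℝ) ≤ Real.sqrt 2 * (d:ℝ)^2 * s / Real.sqrt Real.pi := by
      rw [le_div_iff₀ hsppos]
      have hA : (22.56:ℝ) ≤ Real.sqrt 2 * (d:ℝ)^2 := by nlinarith
      have hB : Real.sqrt 2 * (d:ℝ)^2 * 1 ≤ Real.sqrt 2 * (d:ℝ)^2 * s :=
        mul_le_mul_of_nonneg_left hc.le (by positivity)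
      nlinarith
    have hlog : 1 ≤ Real.log (Real.sqrt 2 * (d:ℝ)^2 * s / Real.sqrt Real.pi) := by
      rw [Real.le_log_iff_exp_le (by linarith)]
      calc Real.exp 1 ≤ 2.7182818286 := Real.exp_one_lt_d9.le
        _ ≤ 12 := by norm_num
        _ ≤ _ := harg
    rw [← hE] at hlog
    have : 1/(2*s^2) < 1/2 := by
      rw [div_lt_div_iff₀ (by nlinarith) (by norm_num)]
      nlinarith
    linarith
  refine ⟨hs1, ?_⟩
  have hargle : Real.sqrt 2 * (d:ℝ)^2 * s / Real.sqrt Real.pi ≤ (d:ℝ)^2 := by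
    rw [div_le_iff₀ hsppos]
    have h1 : Real.sqrt 2 * s ≤ Real.sqrt Real.pi := by nlinarith
    nlinarith
  have hargpos : 0 < Real.sqrt 2 * (d:ℝ)^2 * s / Real.sqrt Real.pi := by positivity
  have hlog2 : Real.log (Real.sqrt 2 * (d:ℝ)^2 * s / Real.sqrt Real.pi)
      ≤ 2 * Real.log d := by
    calc Real.log (Real.sqrt 2 * (d:ℝ)^2 * s / Real.sqrt Real.pi)
        ≤ Real.log ((d:ℝ)^2) := Real.log_le_log hargpos hargle
      _ = 2 * Real.log d := by rw [Real.log_pow]; norm_num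
  have hE2 : 1/(2*s^2) ≤ 2 * Real.log d := by rw [hE]; exact hlog2
  set L := Real.log d
  have h1 : 1 ≤ 2 * L * (2*s^2) := by
    rw [div_le_iff₀ (by positivity)] at hE2
    linarith
  -- from 1 ≤ 4Ls², L ≥ 1, s > 0 deduce 1 ≤ 2Ls, i.e. 1/(2L) ≤ s
  rw [div_le_iff₀ (by positivity)]
  by_contra hc
  push_neg at hc
  have hy0 : 0 < s * (2*L) := by positivity
  nlinarith [mul_lt_mul_of_pos_left hc hy0]


lemma log_ge_one {d : ℕ} (hd4 : 4 ≤ d) : 1 ≤ Real.log d := by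
  have hd : (4:ℝ) ≤ (d:ℝ) := by exact_mod_cast hd4
  rw [Real.le_log_iff_exp_le (by linarith)]
  calc Real.exp 1 ≤ 2.7182818286 := Real.exp_one_lt_d9.le
    _ ≤ (d:ℝ) := by linarith

set_option maxHeartbeats 1600000 in
/-- Lower bound for two-layer discriminators: with `ℓ_d = √d` and `σ_d` solving
`1/(2σ²) = log(√2 d² σ/√π)`, the two-layer IPM is `Ω(1/(d log d))`. -/
theorem lower_bound_2l (σ : ℕ → ℝ)
    (hσ : ∀ d : ℕ, 4 ≤ d → 0 < σ d ∧
      1 / (2 * (σ d) ^ 2) =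
        Real.log (Real.sqrt 2 * (d : ℝ) ^ 2 * σ d / Real.sqrt Real.pi)) :
    (∃ K : ℝ, 0 < K ∧ ∀ d : ℕ, 4 ≤ d → K / Real.log d ≤ σ d) ∧
    ∃ c : ℝ, 0 < c ∧ ∃ d0 : ℕ, ∀ (d : ℕ) (hd : 0 < d), 4 ≤ d → d0 ≤ d →
      ∃ (θ : EuclideanSpace ℝ (Fin d)) (b : ℝ), ‖θ‖ = 1 ∧
        c / ((d : ℝ) * Real.log d) ≤
          |∫ x : EuclideanSpace ℝ (Fin d),
            rhoSin d hd (σ d) (Real.sqrt d) x * relu ((inner ℝ θ x : ℝ) - b)| := by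
  constructor
  · refine ⟨1/2, by norm_num, fun d hd4 => ?_⟩
    obtain ⟨hs0, hE⟩ := hσ d hd4
    have h := (sigma_bounds d hd4 (σ d) hs0 hE).2
    rwa [show (1:ℝ)/2/Real.log d = 1/(2*Real.log d) from div_div 1 2 (Real.log d)]
  · refine ⟨1/100, by norm_num, 4, ?_⟩
    intro d hd hd4 _
    obtain ⟨hs0, hE⟩ := hσ d hd4
    obtain ⟨hs1, hslo⟩ := sigma_bounds d hd4 (σ d) hs0 hE
    have hd4' : (4:ℝ) ≤ (d:ℝ) := by exact_mod_cast hd4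
    have hd0 : (0:ℝ) < (d:ℝ) := by linarith
    have hL1 : 1 ≤ Real.log d := log_ge_one hd4
    have hL0 : 0 < Real.log d := by linarith
    have hℓ2 : (Real.sqrt d)^2 = (d:ℝ) := Real.sq_sqrt (by positivity)
    have hℓ : 2 ≤ Real.sqrt (d:ℝ) := by
      rw [show (2:ℝ) = Real.sqrt 4 from (Real.sqrt_eq_iff_eq_sq (by norm_num)
        (by norm_num)).mpr (by norm_num) |>.symm]
      exact Real.sqrt_le_sqrt hd4'
    obtain ⟨β, hβ⟩ := key_osc (σ d) (Real.sqrt d) hs0 hs1 hℓ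
    refine ⟨EuclideanSpace.single (⟨0, hd⟩ : Fin d) (1:ℝ), β, by simp, ?_⟩
    have hinner : ∀ x : EuclideanSpace ℝ (Fin d),
        (inner ℝ (EuclideanSpace.single (⟨0, hd⟩ : Fin d) (1:ℝ)) x : ℝ)
          = x ⟨0, hd⟩ := fun x => by
      rw [EuclideanSpace.inner_single_left]; simp
    simp_rw [hinner]
    rw [reduce d hd (σ d) (Real.sqrt d) β hs0, abs_mul,
      abs_of_nonneg (show (0:ℝ) ≤ 2*σ d/Real.sqrt (2*Real.pi) by positivity)]
    have hSP0 : 0 < Real.sqrt (2*Real.pi) := Real.sqrt_pos.mpr (by positivity)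
    have hSPhi : Real.sqrt (2*Real.pi) ≤ 2.51 :=
      Real.sqrt_le_iff.mpr ⟨by norm_num, by nlinarith [Real.pi_lt_d2]⟩
    have hS2lo : (1.41:ℝ) ≤ Real.sqrt 2 := by
      rw [show (1.41:ℝ) = Real.sqrt (1.41^2) from (Real.sqrt_sq (by norm_num)).symm]
      exact Real.sqrt_le_sqrt (by norm_num)
    have hsl : 1 ≤ σ d * (2*Real.log d) := by
      rw [div_le_iff₀ (by positivity)] at hslo
      linarith
    have hsq : (Real.pi/(2*Real.sqrt (d:ℝ)))^2 = Real.pi^2/(4*(d:ℝ)) := by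
      rw [div_pow, mul_pow, hℓ2]; norm_num
    calc (1:ℝ)/100/((d:ℝ)*Real.log d)
        ≤ (2*σ d/Real.sqrt (2*Real.pi)) *
            (Real.sqrt 2 * (Real.pi/(2*Real.sqrt (d:ℝ)))^2/64) := by
          rw [hsq]
          have hRHS : (2*σ d/Real.sqrt (2*Real.pi)) *
              (Real.sqrt 2 * (Real.pi^2/(4*(d:ℝ)))/64)
              = σ d*(Real.sqrt 2*Real.pi^2) / (128*Real.sqrt (2*Real.pi)*(d:ℝ)) := by
            field_simp
            ring
          rw [hRHS, div_le_div_iff₀ (by positivity) (by positivity)]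
          have hP2 : (9.85:ℝ) ≤ Real.pi^2 := by nlinarith [Real.pi_gt_d2]
          have h1 : (1.41*9.85:ℝ) ≤ Real.sqrt 2*Real.pi^2 :=
            mul_le_mul hS2lo hP2 (by norm_num) (by positivity)
          have h2 : (1/2:ℝ) ≤ σ d * Real.log d := by linarith
          have h3 : (1/2:ℝ)*(1.41*9.85) ≤ (σ d * Real.log d)*(Real.sqrt 2*Real.pi^2) :=
            mul_le_mul h2 h1 (by norm_num) (by positivity)
          have h4 : (1:ℝ)/100*(128*Real.sqrt (2*Real.pi)) ≤ (1/100)*(128*2.51) := by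
            nlinarith
          nlinarith [mul_le_mul_of_nonneg_right h3 hd0.le,
            mul_le_mul_of_nonneg_right h4 hd0.le, hd0.le, hSP0.le]
      _ ≤ (2*σ d/Real.sqrt (2*Real.pi)) *
            |∫ t : ℝ, Real.exp (-(σ d)^2*t^2/2) *
              (Real.sin (Real.sqrt (d:ℝ)*t) * relu (t-β))| :=
        mul_le_mul_of_nonneg_left hβ (by positivity)

end
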